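/- arXiv:2604.02844 — 2 statements merged into one kernel-verified Lean document; each statement's English description precedes it below -/
import Mathlib

section
/- Let K ⊆ ℝ^N be a closed convex set, and let x^1, x^2 : [0,∞) → ℝ^N be Lipschitz functions satisfying ẋ^a(t) = u^0 - ξ^a(t) for a.e. t, where ξ^a(t) belongs to the normal cone of K at x^a(t), and x^1(0) = x^2(0). Then x^1(t) = x^2(t) for all t ≥ 0. -/
open scoped RealInnerProductSpace
open MeasureTheory Set Filter Topology

private noncomputable def hseq (n : ℕ) : ℝ := 1 / ((n : ℝ) + 1)

private lemma hseq_pos (n : ℕ) : 0 < hseq n := by unfold hseq; positivity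

private lemma hseq_le_one (n : ℕ) : hseq n ≤ 1 := by
  unfold hseq
  rw [div_le_one (by positivity)]
  linarith [Nat.cast_nonneg (α := ℝ) n]

private lemma hseq_tendsto : Tendsto hseq atTop (𝓝 0) :=
  tendsto_one_div_add_atTop_nhds_zero_nat

/-- Difference quotients along the sequence `hseq` converge to the derivative. -/
private lemma tendsto_slope_seq {f : ℝ → ℝ} {c d : ℝ} (hd : HasDerivAt f d c) :
    Tendsto (fun n : ℕ => (f (c + hseq n) - f c) / hseq n) atTop (𝓝 d) := by
  have h1 := hasDerivAt_iff_tendsto_slope.1 hd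
  have h2 : Tendsto (fun n : ℕ => c + hseq n) atTop (𝓝[≠] c) := by
    apply tendsto_nhdsWithin_of_tendsto_nhds_of_eventually_within
    · simpa using tendsto_const_nhds.add hseq_tendsto
    · filter_upwards with n
      simp only [mem_compl_iff, mem_singleton_iff]
      intro h
      have := hseq_pos n
      linarith
  have h3 := h1.comp h2
  have heq : ∀ n : ℕ, slope f c (c + hseq n) = (f (c + hseq n) - f c) / hseq n := by
    intro n
    rw [slope_def_field, add_sub_cancel_left]
  have hcomp : (slope f c ∘ fun n : ℕ => c + hseq n)
      = fun n : ℕ => (f (c + hseq n) - f c) / hseq n := funext fun n => heq n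
  rwa [hcomp] at h3

/-- Fundamental theorem of calculus for a function which is Lipschitz on a neighborhood of
`[a,b]` and differentiable a.e. on `(a,b]`. -/
private lemma ftc_ae {f : ℝ → ℝ} {a b C : ℝ} (hab : a ≤ b) (hf : Continuous f)
    (hC : ∀ s ∈ Icc a (b + 1), ∀ t ∈ Icc a (b + 1), |f s - f t| ≤ C * |s - t|)
    (hdiff : ∀ᵐ x ∂(volume.restrict (Ioc a b)), DifferentiableAt ℝ f x) :
    f b - f a = ∫ x in Ioc a b, deriv f x := by
  set F : ℕ → ℝ → ℝ := fun n x => (f (x + hseq n) - f x) / hseq n with hF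
  set G : ℝ → ℝ := fun u => ∫ x in a..u, f x with hG
  have hGderiv : ∀ c : ℝ, HasDerivAt G (f c) c := fun c =>
    (hf.integral_hasStrictDerivAt a c).hasDerivAt
  -- the two expressions for the limit of ∫ F n
  have calcEq : ∀ n, (∫ x in Ioc a b, F n x) =
      (G (b + hseq n) - G b) / hseq n - (G (a + hseq n) - G a) / hseq n := by
    intro n
    have i1 : IntervalIntegrable (fun x => f (x + hseq n)) volume a b :=
      (hf.comp (continuous_id.add continuous_const)).intervalIntegrable _ _
    have i2 : IntervalIntegrable f volume a b := hf.intervalIntegrable _ _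
    have e1 : (∫ x in Ioc a b, F n x) = ∫ x in a..b, F n x :=
      (intervalIntegral.integral_of_le hab).symm
    have e2 : (∫ x in a..b, F n x)
        = ((∫ x in a..b, f (x + hseq n)) - ∫ x in a..b, f x) / hseq n := by
      rw [← intervalIntegral.integral_sub i1 i2, ← intervalIntegral.integral_div]
    have e3 : (∫ x in a..b, f (x + hseq n)) = ∫ x in (a + hseq n)..(b + hseq n), f x :=
      intervalIntegral.integral_comp_add_right (a := a) (b := b) (f := f) (hseq n)
    have e4 : (∫ x in (a + hseq n)..(b + hseq n), f x) = G (b + hseq n) - G (a + hseq n) := by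
      rw [hG]
      rw [intervalIntegral.integral_interval_sub_left (hf.intervalIntegrable _ _)
        (hf.intervalIntegrable _ _)]
    have e5 : (∫ x in a..b, f x) = G b := rfl
    have e6 : G a = 0 := intervalIntegral.integral_same
    rw [e1, e2, e3, e4, e5, e6]
    ring
  have other : Tendsto (fun n => ∫ x in Ioc a b, F n x) atTop (𝓝 (f b - f a)) := by
    simp only [calcEq]
    exact (tendsto_slope_seq (hGderiv b)).sub (tendsto_slope_seq (hGderiv a))
  -- dominated convergence
  have Fmeas : ∀ n, AEStronglyMeasurable (F n) (volume.restrict (Ioc a b)) := fun n =>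
    (((hf.comp (continuous_id.add continuous_const)).sub hf).div_const _).aestronglyMeasurable
  have bound_int : Integrable (fun _ : ℝ => C) (volume.restrict (Ioc a b)) :=
    integrableOn_const measure_Ioc_lt_top.ne
  have h_bound : ∀ n, ∀ᵐ x ∂(volume.restrict (Ioc a b)), ‖F n x‖ ≤ C := by
    intro n
    filter_upwards [ae_restrict_mem measurableSet_Ioc] with x hx
    have hpn := hseq_pos n
    have hln := hseq_le_one n
    have hx1 : x ∈ Icc a (b + 1) := ⟨hx.1.le, by linarith [hx.2]⟩
    have hx2 : x + hseq n ∈ Icc a (b + 1) := ⟨by linarith [hx.1.le], by linarith [hx.2]⟩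
    have hC' := hC (x + hseq n) hx2 x hx1
    rw [Real.norm_eq_abs, hF]
    simp only
    rw [abs_div, abs_of_pos hpn, div_le_iff₀ hpn]
    calc |f (x + hseq n) - f x| ≤ C * |x + hseq n - x| := hC'
      _ = C * hseq n := by rw [show x + hseq n - x = hseq n by ring, abs_of_pos hpn]
  have h_lim : ∀ᵐ x ∂(volume.restrict (Ioc a b)),
      Tendsto (fun n => F n x) atTop (𝓝 (deriv f x)) := by
    filter_upwards [hdiff] with x hx
    exact tendsto_slope_seq hx.hasDerivAt
  have key := tendsto_integral_of_dominated_convergence (fun _ => C) Fmeas bound_int h_bound h_lim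
  exact tendsto_nhds_unique other key

/-- Uniqueness for the first-order differential inclusion
`ẋ(t) = u⁰ - ξ(t)`, `ξ(t) ∈ N_{x(t)} K`, with `K` closed convex. -/
theorem first_order_inclusion_unique {N : ℕ} (K : Set (EuclideanSpace ℝ (Fin N)))
    (hK_closed : IsClosed K) (hK_convex : Convex ℝ K)
    (u0 : EuclideanSpace ℝ (Fin N))
    (x1 x2 ξ1 ξ2 : ℝ → EuclideanSpace ℝ (Fin N)) (L1 L2 : NNReal)
    (hlip1 : LipschitzWith L1 x1) (hlip2 : LipschitzWith L2 x2)
    (hmem1 : ∀ t, 0 ≤ t → x1 t ∈ K) (hmem2 : ∀ t, 0 ≤ t → x2 t ∈ K)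
    (hode1 : ∀ᵐ t ∂(MeasureTheory.volume.restrict (Set.Ici (0:ℝ))),
      HasDerivAt x1 (u0 - ξ1 t) t ∧ ∀ y ∈ K, ⟪ξ1 t, y - x1 t⟫ ≤ 0)
    (hode2 : ∀ᵐ t ∂(MeasureTheory.volume.restrict (Set.Ici (0:ℝ))),
      HasDerivAt x2 (u0 - ξ2 t) t ∧ ∀ y ∈ K, ⟪ξ2 t, y - x2 t⟫ ≤ 0)
    (hinit : x1 0 = x2 0) :
    ∀ t, 0 ≤ t → x1 t = x2 t := by
  intro b hb
  set v : ℝ → EuclideanSpace ℝ (Fin N) := fun t => x1 t - x2 t with hv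
  have hlipv : LipschitzWith (L1 + L2) v := hlip1.sub hlip2
  have hv0 : v 0 = 0 := by simp [hv, hinit]
  set φ : ℝ → ℝ := fun t => ⟪v t, v t⟫ with hφ
  have hφcont : Continuous φ := hlipv.continuous.inner hlipv.continuous
  set KL : ℝ := ((L1 : ℝ) + (L2 : ℝ)) with hKL
  have hKL0 : 0 ≤ KL := by positivity
  have hvd : ∀ s t : ℝ, ‖v s - v t‖ ≤ KL * |s - t| := by
    intro s t
    have := hlipv.dist_le_mul s t
    rwa [dist_eq_norm, Real.dist_eq, NNReal.coe_add] at this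
  have hvb : ∀ s : ℝ, s ∈ Icc 0 (b + 1) → ‖v s‖ ≤ KL * (b + 1) := by
    intro s hs
    have h1 : ‖v s‖ = ‖v s - v 0‖ := by rw [hv0, sub_zero]
    have h2 := hvd s 0
    rw [sub_zero, abs_of_nonneg hs.1] at h2
    have : KL * s ≤ KL * (b + 1) := by
      apply mul_le_mul_of_nonneg_left hs.2 hKL0
    linarith [h1 ▸ h2]
  -- the local Lipschitz bound for φ
  have hC : ∀ s ∈ Icc (0:ℝ) (b + 1), ∀ t ∈ Icc (0:ℝ) (b + 1),
      |φ s - φ t| ≤ (2 * KL * KL * (b + 1)) * |s - t| := by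
    intro s hs t ht
    have hpol : φ s - φ t = ⟪v s - v t, v s + v t⟫ := by
      rw [inner_sub_left, inner_add_right, inner_add_right, hφ]
      simp only
      rw [real_inner_comm (v t) (v s)]
      ring
    rw [hpol]
    calc |⟪v s - v t, v s + v t⟫| ≤ ‖v s - v t‖ * ‖v s + v t‖ := abs_real_inner_le_norm _ _
      _ ≤ (KL * |s - t|) * (KL * (b + 1) + KL * (b + 1)) := by
          apply mul_le_mul (hvd s t) ?_ (norm_nonneg _) (by positivity)
          calc ‖v s + v t‖ ≤ ‖v s‖ + ‖v t‖ := norm_add_le _ _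
            _ ≤ KL * (b + 1) + KL * (b + 1) := add_le_add (hvb s hs) (hvb t ht)
      _ = (2 * KL * KL * (b + 1)) * |s - t| := by ring
  -- a.e. derivative information for φ
  have hae : ∀ᵐ t ∂(volume.restrict (Ici (0:ℝ))),
      DifferentiableAt ℝ φ t ∧ deriv φ t ≤ 0 := by
    filter_upwards [hode1, hode2, ae_restrict_mem measurableSet_Ici] with t h1 h2 ht
    have hdv : HasDerivAt v (ξ2 t - ξ1 t) t := by
      have := h1.1.sub h2.1
      have heq : (u0 - ξ1 t) - (u0 - ξ2 t) = ξ2 t - ξ1 t := by abel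
      rwa [heq] at this
    have hdφ : HasDerivAt φ (⟪v t, ξ2 t - ξ1 t⟫ + ⟪ξ2 t - ξ1 t, v t⟫) t :=
      HasDerivAt.inner ℝ hdv hdv
    have e2 : ⟪ξ2 t, x1 t - x2 t⟫ ≤ 0 := h2.2 (x1 t) (hmem1 t ht)
    have e1 : ⟪ξ1 t, x2 t - x1 t⟫ ≤ 0 := h1.2 (x2 t) (hmem2 t ht)
    have e1' : 0 ≤ ⟪ξ1 t, x1 t - x2 t⟫ := by
      have heq : x2 t - x1 t = -(x1 t - x2 t) := by abel
      rw [heq, inner_neg_right] at e1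
      linarith
    have hkey : ⟪ξ2 t - ξ1 t, v t⟫ ≤ 0 := by
      rw [inner_sub_left]
      have hvt : v t = x1 t - x2 t := rfl
      rw [hvt]
      linarith
    have hkey2 : ⟪v t, ξ2 t - ξ1 t⟫ + ⟪ξ2 t - ξ1 t, v t⟫ ≤ 0 := by
      have hcomm := real_inner_comm (v t) (ξ2 t - ξ1 t)
      linarith
    refine ⟨hdφ.differentiableAt, ?_⟩
    rw [hdφ.deriv]
    exact hkey2
  -- apply the FTC lemma
  have hdiff : ∀ᵐ x ∂(volume.restrict (Ioc (0:ℝ) b)), DifferentiableAt ℝ φ x :=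
    (ae_restrict_of_ae_restrict_of_subset (fun x hx => hx.1.le : Ioc (0:ℝ) b ⊆ Ici 0) hae).mono fun x hx => hx.1
  have hftc := ftc_ae hb hφcont hC hdiff
  have hnonpos : (∫ x in Ioc (0:ℝ) b, deriv φ x) ≤ 0 := by
    apply integral_nonpos_of_ae
    filter_upwards [ae_restrict_of_ae_restrict_of_subset (fun x hx => hx.1.le : Ioc (0:ℝ) b ⊆ Ici 0) hae] with x hx
    exact hx.2
  have hφ0 : φ 0 = 0 := by rw [hφ]; simp [hv0]
  have hφb_le : φ b ≤ 0 := by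
    rw [← hftc] at hnonpos
    linarith
  have hφb_ge : 0 ≤ φ b := real_inner_self_nonneg
  have : ⟪v b, v b⟫ = (0:ℝ) := le_antisymm hφb_le hφb_ge
  have hvb0 : v b = 0 := by
    rwa [real_inner_self_eq_norm_sq, pow_eq_zero_iff (two_ne_zero), norm_eq_zero] at this
  have hfin : x1 b - x2 b = 0 := hvb0
  exact sub_eq_zero.mp hfin
end

section
/- Sticky-particle Oleinik estimate: let x_1,…,x_N : [0,∞) → ℝ be Lipschitz trajectories with x_i(0) + 2r ≤ x_{i+1}(0), such that the order is preserved (x_i(t) ≤ x_{i+1}(t) - 2r or x_{i+1}(t) = x_i(t) + 2r with equal velocities after contact), and suppose that on any interval during which particles i-1 and i are never in contact, u_{i-1} = ẋ_{i-1} is nondecreasing and u_i = ẋ_i is nonincreasing in time. Then for every t > 0 at which particles i-1 and i are not in contact, (u_i(t) - u_{i-1}(t))/(x_i(t) - x_{i-1}(t)) < 1/t. -/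
/-- Sticky-particle Oleinik estimate: if particles `i-1` and `i` have not been in
contact on `[0,t]`, the velocity of `i-1` being nondecreasing and that of `i`
nonincreasing in time, then `(u_i(t) - u_{i-1}(t))/(x_i(t) - x_{i-1}(t)) < 1/t`. -/
theorem sticky_oleinik (N : ℕ) (r : ℝ) (hr : 0 < r)
    (x u : ℕ → ℝ → ℝ) (i : ℕ) (hi : 1 ≤ i) (hiN : i < N)
    (t : ℝ) (ht : 0 < t)
    (hderiv : ∀ j : ℕ, j < N → ∀ s ∈ Set.Icc 0 t, HasDerivAt (x j) (u j s) s)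
    (hinit : x (i - 1) 0 + 2 * r ≤ x i 0)
    (hnocontact : ∀ s ∈ Set.Icc 0 t, 2 * r < x i s - x (i - 1) s)
    (hmono : MonotoneOn (u (i - 1)) (Set.Icc 0 t))
    (hanti : AntitoneOn (u i) (Set.Icc 0 t)) :
    (u i t - u (i - 1) t) / (x i t - x (i - 1) t) < 1 / t := by
  set v : ℝ := u i t - u (i - 1) t with hv
  set g : ℝ → ℝ := fun s => v * s - (x i s - x (i - 1) s) with hg
  have hi1N : i - 1 < N := lt_of_le_of_lt (Nat.sub_le i 1) hiN
  have htmem : t ∈ Set.Icc (0:ℝ) t := Set.right_mem_Icc.2 ht.le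
  have h0mem : (0:ℝ) ∈ Set.Icc (0:ℝ) t := Set.left_mem_Icc.2 ht.le
  have hgd : ∀ s ∈ Set.Icc (0:ℝ) t,
      HasDerivAt g (v - (u i s - u (i - 1) s)) s := by
    intro s hs
    exact (hasDerivAt_id s).const_mul v |>.sub
      ((hderiv i hiN s hs).sub (hderiv (i-1) hi1N s hs)) |>.congr_deriv (by ring)
  have hcont : ContinuousOn g (Set.Icc 0 t) :=
    fun s hs => ((hgd s hs).continuousAt).continuousWithinAt
  have hanti' : AntitoneOn g (Set.Icc 0 t) := by
    apply antitoneOn_of_deriv_nonpos (convex_Icc 0 t) hcont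
    · intro s hs
      rw [interior_Icc] at hs
      exact ((hgd s (Set.Ioo_subset_Icc_self hs)).differentiableAt).differentiableWithinAt
    · intro s hs
      rw [interior_Icc] at hs
      have hs' : s ∈ Set.Icc (0:ℝ) t := Set.Ioo_subset_Icc_self hs
      rw [(hgd s hs').deriv]
      have h1 : u i t ≤ u i s := hanti hs' htmem hs.2.le
      have h2 : u (i - 1) s ≤ u (i - 1) t := hmono hs' htmem hs.2.le
      simp only [hv]; linarith
  have hkey : g t ≤ g 0 := hanti' h0mem htmem ht.le
  have hG : 2 * r < x i t - x (i - 1) t := hnocontact t htmem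
  have hGpos : 0 < x i t - x (i - 1) t := lt_trans (by linarith) hG
  rw [div_lt_div_iff₀ hGpos ht]
  simp only [hg, hv] at hkey ⊢
  nlinarith
end
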